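/- Let α be a nonempty finite type, let n : α → ℕ be a family of counts with total count N = ∑_{a} n(a) > 0, and let θ : α → ℝ be a probability mass function (θ(a) ≥ 0 for all a and ∑_a θ(a) = 1) such that θ(a) > 0 whenever n(a) > 0. Then equality ∑_a (n(a) : ℝ) · log(θ(a)) = ∑_a (n(a) : ℝ) · log((n(a) : ℝ) / N) holds if and only if θ(a) = (n(a) : ℝ) / N for every a ∈ α. -/

import Mathlib

/-- The multinomial log-likelihood attains its global maximum
exactly at the empirical frequencies. -/
theorem multinomial_loglik_eq_iff {α : Type*} [Fintype α] [Nonempty α]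
    (n : α → ℕ) (N : ℕ) (hN : N = ∑ a, n a) (hNpos : 0 < N)
    (θ : α → ℝ) (hθ0 : ∀ a, 0 ≤ θ a) (hθ1 : ∑ a, θ a = 1)
    (hpos : ∀ a, 0 < n a → 0 < θ a) :
    (∑ a, (n a : ℝ) * Real.log (θ a) =
        ∑ a, (n a : ℝ) * Real.log ((n a : ℝ) / (N : ℝ))) ↔
      ∀ a, θ a = (n a : ℝ) / (N : ℝ) := by
  have hNR : (0:ℝ) < N := by exact_mod_cast hNpos
  constructor
  · intro heq
    -- h a := N * θ a - n a - (n a * log θ a - n a * log (n a / N)) ≥ 0, sum = 0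
    set h : α → ℝ := fun a =>
      (N:ℝ) * θ a - (n a : ℝ) -
        ((n a : ℝ) * Real.log (θ a) - (n a : ℝ) * Real.log ((n a : ℝ) / (N:ℝ))) with hh
    have hnonneg : ∀ a ∈ Finset.univ, 0 ≤ h a := by
      intro a _
      simp only [hh]
      rcases Nat.eq_zero_or_pos (n a) with h0 | hna
      · simp only [h0, Nat.cast_zero, zero_mul, sub_zero, sub_self]
        exact mul_nonneg hNR.le (hθ0 a)
      · have hθa : 0 < θ a := hpos a hna
        have hnaR : (0:ℝ) < n a := by exact_mod_cast hna
        have hx : (0:ℝ) < θ a * N / n a := by positivity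
        have hlog : Real.log (θ a * (N:ℝ) / (n a : ℝ)) ≤ θ a * N / n a - 1 :=
          Real.log_le_sub_one_of_pos hx
        have hrw : Real.log (θ a) - Real.log ((n a : ℝ) / (N:ℝ)) =
            Real.log (θ a * (N:ℝ) / (n a : ℝ)) := by
          rw [Real.log_div (by positivity) hnaR.ne', Real.log_mul hθa.ne' hNR.ne',
            Real.log_div hnaR.ne' hNR.ne']
          ring
        have := mul_le_mul_of_nonneg_left hlog hnaR.le
        rw [← hrw] at this
        have hfield : (n a : ℝ) * (θ a * (N:ℝ) / (n a : ℝ) - 1) = (N:ℝ) * θ a - n a := by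
          field_simp
        nlinarith [this]
    have hsum : ∑ a, h a = 0 := by
      simp only [hh]
      rw [Finset.sum_sub_distrib, Finset.sum_sub_distrib, Finset.sum_sub_distrib,
        ← Finset.mul_sum, hθ1, heq]
      have : ∑ a, ((n a : ℝ)) = (N:ℝ) := by rw [hN]; push_cast; rfl
      rw [this]; ring
    have hall := (Finset.sum_eq_zero_iff_of_nonneg hnonneg).mp hsum
    intro a
    have ha0 := hall a (Finset.mem_univ a)
    simp only [hh] at ha0
    rcases Nat.eq_zero_or_pos (n a) with h0 | hna
    · simp [h0] at ha0 ⊢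
      rcases ha0 with h | h
      · exact absurd h hNpos.ne'
      · exact h
    · have hθa : 0 < θ a := hpos a hna
      have hnaR : (0:ℝ) < n a := by exact_mod_cast hna
      set x := θ a * (N:ℝ) / (n a : ℝ) with hxdef
      have hx : (0:ℝ) < x := by positivity
      have hrw : Real.log (θ a) - Real.log ((n a : ℝ) / (N:ℝ)) = Real.log x := by
        rw [hxdef, Real.log_div (by positivity) hnaR.ne', Real.log_mul hθa.ne' hNR.ne',
          Real.log_div hnaR.ne' hNR.ne']
        ring
      have hlx : Real.log x = x - 1 := by
        have h1 : (n a : ℝ) * Real.log x = (n a : ℝ) * (x - 1) := by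
          have hfield : (n a : ℝ) * (x - 1) = (N:ℝ) * θ a - n a := by
            rw [hxdef]; field_simp
          rw [hfield]
          have : (n a : ℝ) * Real.log (θ a) - (n a : ℝ) * Real.log ((n a : ℝ) / (N:ℝ)) =
              (n a : ℝ) * Real.log x := by rw [← hrw]; ring
          linarith [ha0, this]
        exact mul_left_cancel₀ hnaR.ne' h1
      have hx1 : x = 1 := by
        by_contra hne
        exact absurd hlx (ne_of_lt (Real.log_lt_sub_one_of_pos hx hne))
      have : θ a * (N:ℝ) = (n a : ℝ) := by
        rw [hxdef, div_eq_one_iff_eq hnaR.ne'] at hx1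
        exact hx1
      field_simp
      linarith [this]
  · intro hθ
    simp only [hθ]
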